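/- Under the setting of the coefficient-bound lemma (columns bounded by B, feasible binary x* with support size K* and residual ≤ R), if additionally z is restricted to nonnegative integers ℤ₊ⁿ and M satisfies 3M² > 2B(R + M√K*) + B², then any minimizer z^opt of ‖Vz + g†‖₂² + M²‖z‖₂² over ℤ₊ⁿ lies in {0,1}ⁿ and satisfies ‖Vz^opt + g†‖₂² + M²‖z^opt‖₂² ≤ R² + M²K*. -/

import Mathlib

open Finset

set_option maxHeartbeats 1000000 in
theorem binary_optimality_nonneg_lattice {d n : ℕ}
    (v : Fin n → EuclideanSpace ℝ (Fin d)) (B M R : ℝ)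
    (hB : ∀ i, ‖v i‖ ≤ B) (hM : 0 < M)
    (g : EuclideanSpace ℝ (Fin d))
    (xs : Fin n → ℝ) (hxs : ∀ i, xs i = 0 ∨ xs i = 1)
    (Ks : ℕ) (hKs : (Finset.univ.filter fun i => xs i ≠ 0).card = Ks)
    (hres : ‖(∑ i, xs i • v i) + g‖ ≤ R)
    (zopt : Fin n → ℕ)
    (hopt : ∀ z : Fin n → ℕ,
      ‖(∑ i, (zopt i : ℝ) • v i) + g‖ ^ 2 + M ^ 2 * ∑ i, ((zopt i : ℝ)) ^ 2
        ≤ ‖(∑ i, (z i : ℝ) • v i) + g‖ ^ 2 + M ^ 2 * ∑ i, ((z i : ℝ)) ^ 2)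
    (hsep : 2 * B * (R + M * Real.sqrt Ks) + B ^ 2 < 3 * M ^ 2) :
    (∀ i, zopt i = 0 ∨ zopt i = 1) ∧
    ‖(∑ i, (zopt i : ℝ) • v i) + g‖ ^ 2 + M ^ 2 * ∑ i, ((zopt i : ℝ)) ^ 2
      ≤ R ^ 2 + M ^ 2 * (Ks : ℝ) := by
  classical
  have hR0 : 0 ≤ R := le_trans (norm_nonneg _) hres
  set zs : Fin n → ℕ := fun i => if xs i = 0 then 0 else 1 with hzsdef
  have hcast : ∀ i, ((zs i : ℝ)) = xs i := by
    intro i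
    rcases hxs i with h | h <;> simp [zs, h]
  have hsumzs : ∑ i, ((zs i : ℝ)) ^ 2 = (Ks : ℝ) := by
    have h1 : ∀ i ∈ Finset.univ, ((zs i : ℝ)) ^ 2
        = if xs i ≠ 0 then (1 : ℝ) else 0 := by
      intro i _
      rcases hxs i with h | h <;> simp [zs, h]
    rw [Finset.sum_congr rfl h1, Finset.sum_boole, hKs]
  -- value bound
  have hFzs : ‖(∑ i, (zs i : ℝ) • v i) + g‖ ^ 2 + M ^ 2 * ∑ i, ((zs i : ℝ)) ^ 2
      ≤ R ^ 2 + M ^ 2 * (Ks : ℝ) := by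
    have h2 : (∑ i, (zs i : ℝ) • v i) = ∑ i, xs i • v i := by
      refine Finset.sum_congr rfl fun i _ => ?_
      rw [hcast]
    rw [h2, hsumzs]
    have : ‖(∑ i, xs i • v i) + g‖ ^ 2 ≤ R ^ 2 :=
      pow_le_pow_left₀ (norm_nonneg _) hres 2
    linarith
  have hval : ‖(∑ i, (zopt i : ℝ) • v i) + g‖ ^ 2 + M ^ 2 * ∑ i, ((zopt i : ℝ)) ^ 2
      ≤ R ^ 2 + M ^ 2 * (Ks : ℝ) := le_trans (hopt zs) hFzs
  -- norm bound on u
  set u : EuclideanSpace ℝ (Fin d) := (∑ i, (zopt i : ℝ) • v i) + g with hudef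
  have hsq : 0 ≤ M ^ 2 * ∑ i, ((zopt i : ℝ)) ^ 2 :=
    mul_nonneg (sq_nonneg _) (Finset.sum_nonneg fun i _ => sq_nonneg _)
  have hsqrt : Real.sqrt Ks ^ 2 = (Ks : ℝ) := Real.sq_sqrt (Nat.cast_nonneg _)
  have hsqrt0 : 0 ≤ Real.sqrt Ks := Real.sqrt_nonneg _
  have hB0 : 0 ≤ R + M * Real.sqrt Ks :=
    add_nonneg hR0 (mul_nonneg hM.le hsqrt0)
  have huB : ‖u‖ ≤ R + M * Real.sqrt Ks := by
    have h1 : ‖u‖ ^ 2 ≤ (R + M * Real.sqrt Ks) ^ 2 := by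
      nlinarith [mul_nonneg (mul_nonneg hR0 hM.le) hsqrt0]
    have h2 := Real.sqrt_le_sqrt h1
    rwa [Real.sqrt_sq (norm_nonneg u), Real.sqrt_sq hB0] at h2
  constructor
  · intro i
    by_contra hbad
    push_neg at hbad
    have hk2 : 2 ≤ zopt i := by omega
    set z' : Fin n → ℕ := fun j => if j = i then zopt i - 1 else zopt j with hz'def
    have hcastk : ((zopt i - 1 : ℕ) : ℝ) = (zopt i : ℝ) - 1 := by
      have : (1 : ℕ) ≤ zopt i := by omega
      push_cast [Nat.cast_sub this]
      ring
    have hsv : ∑ j, ((z' j : ℝ)) • v j = (∑ j, ((zopt j : ℝ)) • v j) - v i := by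
      have key : ∀ j ∈ Finset.univ, ((z' j : ℝ)) • v j
          = (zopt j : ℝ) • v j + (if j = i then -(v i) else 0) := by
        intro j _
        by_cases h : j = i
        · subst h
          simp only [z', if_pos rfl, hcastk, sub_smul, one_smul]
          abel
        · simp [z', h]
      rw [Finset.sum_congr rfl key, Finset.sum_add_distrib,
        Finset.sum_ite_eq' Finset.univ i fun _ => -(v i)]
      simp [sub_eq_add_neg]
    have hss : ∑ j, ((z' j : ℝ)) ^ 2
        = (∑ j, ((zopt j : ℝ)) ^ 2) + (1 - 2 * (zopt i : ℝ)) := by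
      have key : ∀ j ∈ Finset.univ, ((z' j : ℝ)) ^ 2
          = (zopt j : ℝ) ^ 2 + (if j = i then 1 - 2 * (zopt i : ℝ) else 0) := by
        intro j _
        by_cases h : j = i
        · subst h
          simp only [z', if_pos rfl, hcastk, ite_true, eq_self_iff_true]
          ring
        · simp [z', h]
      rw [Finset.sum_congr rfl key, Finset.sum_add_distrib,
        Finset.sum_ite_eq' Finset.univ i fun _ => 1 - 2 * (zopt i : ℝ)]
      simp
    have hopt' := hopt z'
    rw [hss] at hopt'
    have hnorm' : ‖(∑ j, ((z' j : ℝ)) • v j) + g‖ ^ 2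
        = ‖u‖ ^ 2 - 2 * inner ℝ u (v i) + ‖v i‖ ^ 2 := by
      have : (∑ j, ((z' j : ℝ)) • v j) + g = u - v i := by
        rw [hsv, hudef]; abel
      rw [this, @norm_sub_sq_real]
    rw [hnorm'] at hopt'
    have hinner : |inner ℝ u (v i)| ≤ ‖u‖ * ‖v i‖ := abs_real_inner_le_norm u (v i)
    have hvi0 : 0 ≤ ‖v i‖ := norm_nonneg _
    have hvi : ‖v i‖ ≤ B := hB i
    have habs : -(‖u‖ * ‖v i‖) ≤ inner ℝ u (v i) := (abs_le.mp hinner).1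
    have hk : (2 : ℝ) ≤ (zopt i : ℝ) := by exact_mod_cast hk2
    have hexp : M ^ 2 * ((∑ j, ((zopt j : ℝ)) ^ 2) + (1 - 2 * (zopt i : ℝ)))
        = M ^ 2 * (∑ j, ((zopt j : ℝ)) ^ 2) + M ^ 2 * (1 - 2 * (zopt i : ℝ)) := by
      ring
    rw [hexp] at hopt'
    have h4 : ‖v i‖ ^ 2 ≤ B ^ 2 := pow_le_pow_left₀ hvi0 hvi 2
    have h5 : ‖u‖ * ‖v i‖ ≤ (R + M * Real.sqrt Ks) * B :=
      mul_le_mul huB hvi hvi0 hB0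
    have h6 : M ^ 2 * (1 - 2 * (zopt i : ℝ)) ≤ -3 * M ^ 2 := by
      have := mul_nonneg (sq_nonneg M) (by linarith : (0:ℝ) ≤ 2 * (zopt i : ℝ) - 4)
      nlinarith [this]
    linarith
  · exact hval
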